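/- If M_1, ..., M_m is a forward hom-orthogonal sequence of Schurian Λ-modules, then for any k < m the truncated sequence M_1, ..., M_k is also forward hom-orthogonal. -/

import Mathlib

variable (Λ : Type) [Ring Λ]

/-- A module is Schurian if its endomorphism ring is a division ring:
it is nonzero and every nonzero endomorphism is invertible. -/
def Schurian (M : ModuleCat.{0} Λ) : Prop :=
  Nontrivial M ∧ ∀ f : M ⟶ M, f = 0 ∨ Function.Bijective f

/-- The torsion class `G(M) = ^⊥(M^⊥)` generated by `M` inside the category
of finite-length `Λ`-modules. -/
def torsionClassOf (M : ModuleCat.{0} Λ) : Set (ModuleCat.{0} Λ) :=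
  {N | ∀ P : ModuleCat.{0} Λ, IsFiniteLength Λ P →
    (∀ f : M ⟶ P, f = 0) → ∀ g : N ⟶ P, g = 0}

/-- `X` can be inserted into the sequence `M` at position `k` (after the first `k`
terms) preserving forward hom-orthogonality. -/
def Insertable {m : ℕ} (M : Fin m → ModuleCat.{0} Λ) (X : ModuleCat.{0} Λ)
    (k : ℕ) : Prop :=
  ∀ i : Fin m, ((i : ℕ) < k → ∀ f : M i ⟶ X, f = 0) ∧
    (k ≤ (i : ℕ) → ∀ f : X ⟶ M i, f = 0)

/-- A forward hom-orthogonal sequence: a sequence of Schurian (finite-length)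
modules `M_1, ..., M_m` with `Hom(M_i, M_j) = 0` for `i < j`, such that no
Schurian module `X` lying in the torsion class `G(M_1 ⊕ ⋯ ⊕ M_m)` can be
inserted anywhere into the sequence preserving condition (1). -/
def ForwardHomOrthogonal (m : ℕ) (M : Fin m → ModuleCat.{0} Λ) : Prop :=
  (∀ i, IsFiniteLength Λ (M i)) ∧ (∀ i, Schurian Λ (M i)) ∧
  (∀ i j : Fin m, i < j → ∀ f : M i ⟶ M j, f = 0) ∧
  ¬ ∃ X : ModuleCat.{0} Λ, IsFiniteLength Λ X ∧ Schurian Λ X ∧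
      X ∈ torsionClassOf Λ (ModuleCat.of Λ (∀ i, M i)) ∧
      ∃ k ≤ m, Insertable Λ M X k


section Aux

variable {Λ}

/-- If every component receives only the zero map to `P`, then so does the product. -/
lemma pi_hom_zero {n : ℕ} (N : Fin n → ModuleCat.{0} Λ) (P : ModuleCat.{0} Λ)
    (h : ∀ l, ∀ f : N l ⟶ P, f = 0) (g : ModuleCat.of Λ (∀ l, N l) ⟶ P) : g = 0 := by
  apply ModuleCat.hom_ext
  refine LinearMap.ext fun x => ?_
  rw [ModuleCat.hom_zero, LinearMap.zero_apply]
  have hx : x = ∑ l, Pi.single l (x l) := (Finset.univ_sum_single x).symm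
  rw [hx, map_sum]
  refine Finset.sum_eq_zero fun l _ => ?_
  have hz := h l (ModuleCat.ofHom (g.hom.comp
    (LinearMap.single Λ (fun l => N l) l)))
  exact LinearMap.congr_fun (congrArg ModuleCat.Hom.hom hz) (x l)

end Aux

/-- If `M_1, ..., M_m` is a forward hom-orthogonal sequence of
Schurian `Λ`-modules, then so is the truncation `M_1, ..., M_k` for any `k < m`. -/
theorem stmt_4 (m : ℕ) (M : Fin m → ModuleCat.{0} Λ)
    (hM : ForwardHomOrthogonal Λ m M) (k : ℕ) (hk : k < m) :
    ForwardHomOrthogonal Λ k (fun i => M (Fin.castLE hk.le i)) := by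
  obtain ⟨hfl, hsch, horth, hins⟩ := hM
  refine ⟨fun i => hfl _, fun i => hsch _, fun i j hij f => horth _ _ hij f, ?_⟩
  rintro ⟨X, hXfl, hXs, hXt, j, hjk, hIns⟩
  apply hins
  refine ⟨X, hXfl, hXs, ?_, j, hjk.trans hk.le, ?_⟩
  · -- X is in the torsion class of the full product
    intro P hP hPf g
    apply hXt P hP
    intro f
    -- f : product over Fin k ⟶ P ; kill it using surjectivity of projection
    have hπ : ∀ y : (∀ i : Fin k, M (Fin.castLE hk.le i)), f y = 0 := by
      intro y
      -- section : extend y by zero to a full tuple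
      set z : ∀ i : Fin m, M i := fun i =>
        if h : (i : ℕ) < k then y ⟨(i : ℕ), h⟩ else 0 with hz
      -- composite full product → trunc product → P
      let π : (∀ i : Fin m, M i) →ₗ[Λ] (∀ i : Fin k, M (Fin.castLE hk.le i)) :=
        { toFun := fun x i => x (Fin.castLE hk.le i)
          map_add' := fun _ _ => rfl
          map_smul' := fun _ _ => rfl }
      have hcomp := hPf (ModuleCat.ofHom
        (f.hom.comp π))
      have hzy : π z = y := by
        funext i
        simp only [π, hz, LinearMap.coe_mk, AddHom.coe_mk]
        exact dif_pos i.isLt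
      calc f y = f (π z) := by rw [hzy]
        _ = 0 := LinearMap.congr_fun (congrArg ModuleCat.Hom.hom hcomp) z
    exact ModuleCat.hom_ext (LinearMap.ext hπ)
  · intro i
    refine ⟨fun hi f => ?_, fun hi f => ?_⟩
    · exact (hIns ⟨(i : ℕ), lt_of_lt_of_le hi hjk⟩).1 hi f
    · by_cases hik : (i : ℕ) < k
      · exact (hIns ⟨(i : ℕ), hik⟩).2 hi f
      · -- i ≥ k : use the torsion class membership with P = M i
        refine hXt (M i) (hfl i) ?_ f
        refine pi_hom_zero _ _ fun l g => ?_
        exact horth (Fin.castLE hk.le l) i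
          (show (l : ℕ) < (i : ℕ) from lt_of_lt_of_le l.isLt (le_of_not_gt hik)) g
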